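/- Let A, B, Aₜ, Bₜ (t ∈ ℕ) be n×n and m×m real matrices with all Bₜ invertible, a = sup_t ‖Aₜ‖ < 1 and b = sup_t ‖Bₜ⁻¹‖ < 1, and let Q₁₂,ₜ, Q₂₁,ₜ be matrices with c = sup_t ‖Q₁₂,ₜ‖, d = sup_t ‖Q₂₁,ₜ‖ satisfying cd < ((1-ab)/(2b))². Define, for fixed T, the backward recursion K_{T,T+1} = 0 and K_{T,T-i-1} = L_{T,T-i}⁻¹ (Q₂₁,T-i + K_{T,T-i} A_{T-i}) where L_{T,T-i} = B_{T-i} + K_{T,T-i} Q₁₂,T-i. Then for every i = 0,…,T the matrix L_{T,T-i} is invertible, the recursion is well defined, and ‖B_{T-i}⁻¹‖·‖K_{T,T-i+1}‖·‖Q₁₂,T-i‖ ≤ (1-ab)/2 < 1. -/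

import Mathlib

open ContinuousLinearMap

private lemma stmt13_step {n m : ℕ} {a b c d s : ℝ}
    (hb0 : 0 < b) (hs0 : 0 ≤ s)
    (key1 : b * c * s ≤ (1 - a * b) / 2) (he2 : (1 - a * b) / 2 < 1)
    (key2 : b * c * s ^ 2 + b * d = (1 - a * b) * s)
    (Bt Binvt : EuclideanSpace ℝ (Fin m) →L[ℝ] EuclideanSpace ℝ (Fin m))
    (Q12t : EuclideanSpace ℝ (Fin m) →L[ℝ] EuclideanSpace ℝ (Fin n))
    (Q21t Ki : EuclideanSpace ℝ (Fin n) →L[ℝ] EuclideanSpace ℝ (Fin m))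
    (At : EuclideanSpace ℝ (Fin n) →L[ℝ] EuclideanSpace ℝ (Fin n))
    (hB1 : Bt ∘L Binvt = 1) (hB2 : Binvt ∘L Bt = 1)
    (hBn : ‖Binvt‖ ≤ b) (hAn : ‖At‖ ≤ a) (hQ12n : ‖Q12t‖ ≤ c) (hQ21n : ‖Q21t‖ ≤ d)
    (hKi : ‖Ki‖ ≤ s) :
    IsUnit (Bt + Ki ∘L Q12t) ∧
      ‖(Ring.inverse (Bt + Ki ∘L Q12t)) ∘L (Q21t + Ki ∘L At)‖ ≤ s := by
  set M : EuclideanSpace ℝ (Fin m) →L[ℝ] EuclideanSpace ℝ (Fin m) :=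
    Binvt ∘L (Ki ∘L Q12t) with hM
  have hKQ : ‖Ki ∘L Q12t‖ ≤ s * c :=
    le_trans (opNorm_comp_le _ _) (mul_le_mul hKi hQ12n (norm_nonneg _) hs0)
  have hMnorm : ‖M‖ ≤ b * (s * c) :=
    le_trans (opNorm_comp_le _ _) (mul_le_mul hBn hKQ (norm_nonneg _) hb0.le)
  have hbsc : b * (s * c) ≤ (1 - a * b) / 2 := by nlinarith [key1]
  have hMlt : ‖M‖ < 1 := by linarith
  have hneg : ‖-M‖ < 1 := by rwa [norm_neg]
  let u1 : (EuclideanSpace ℝ (Fin m) →L[ℝ] EuclideanSpace ℝ (Fin m))ˣ :=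
    Units.oneSub (-M) hneg
  let uB : (EuclideanSpace ℝ (Fin m) →L[ℝ] EuclideanSpace ℝ (Fin m))ˣ :=
    ⟨Bt, Binvt, by rw [ContinuousLinearMap.mul_def]; exact hB1,
      by rw [ContinuousLinearMap.mul_def]; exact hB2⟩
  have hBM : Bt * M = Ki ∘L Q12t := by
    rw [hM, ContinuousLinearMap.mul_def, ← ContinuousLinearMap.comp_assoc, hB1,
      ContinuousLinearMap.one_def, ContinuousLinearMap.id_comp]
  have hLval : Bt + Ki ∘L Q12t = ((uB * u1 : _ˣ) : _) := by
    have : ((uB * u1 : _ˣ) : EuclideanSpace ℝ (Fin m) →L[ℝ] EuclideanSpace ℝ (Fin m))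
        = Bt * (1 - -M) := rfl
    rw [this, sub_neg_eq_add, mul_add, mul_one, hBM]
  have hU : IsUnit (Bt + Ki ∘L Q12t) := hLval ▸ (uB * u1).isUnit
  refine ⟨hU, ?_⟩
  have hInv : Ring.inverse (Bt + Ki ∘L Q12t)
      = (↑u1⁻¹ : EuclideanSpace ℝ (Fin m) →L[ℝ] EuclideanSpace ℝ (Fin m)) * Binvt := by
    rw [hLval, Ring.inverse_unit, mul_inv_rev, Units.val_mul]
    rfl
  have hone : ‖(1 : EuclideanSpace ℝ (Fin m) →L[ℝ] EuclideanSpace ℝ (Fin m))‖ ≤ 1 := by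
    rw [ContinuousLinearMap.one_def]; exact norm_id_le
  have hu1norm : ‖(↑u1⁻¹ : EuclideanSpace ℝ (Fin m) →L[ℝ] EuclideanSpace ℝ (Fin m))‖
      ≤ (1 - ‖M‖)⁻¹ := by
    have hval : (↑u1⁻¹ : EuclideanSpace ℝ (Fin m) →L[ℝ] EuclideanSpace ℝ (Fin m))
        = ∑' k : ℕ, (-M) ^ k := rfl
    have hgeom := tsum_geometric_le_of_norm_lt_one (-M) hneg
    rw [norm_neg] at hgeom
    rw [hval]
    linarith
  have h1x : 0 < 1 - ‖M‖ := by linarith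
  have hInvNorm : ‖Ring.inverse (Bt + Ki ∘L Q12t)‖ ≤ (1 - ‖M‖)⁻¹ * b := by
    rw [hInv]
    exact le_trans (norm_mul_le _ _)
      (mul_le_mul hu1norm hBn (norm_nonneg _) (by positivity))
  have hRHS : ‖Q21t + Ki ∘L At‖ ≤ d + s * a :=
    le_trans (norm_add_le _ _)
      (add_le_add hQ21n
        (le_trans (opNorm_comp_le _ _) (mul_le_mul hKi hAn (norm_nonneg _) hs0)))
  have hd0 : 0 ≤ d := le_trans (norm_nonneg _) hQ21n
  have ha0 : 0 ≤ a := le_trans (norm_nonneg _) hAn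
  have hfin : b * (d + s * a) ≤ s * (1 - ‖M‖) := by
    nlinarith [key2, mul_nonneg hs0 (sub_nonneg.2 hMnorm)]
  calc ‖(Ring.inverse (Bt + Ki ∘L Q12t)) ∘L (Q21t + Ki ∘L At)‖
      ≤ ‖Ring.inverse (Bt + Ki ∘L Q12t)‖ * ‖Q21t + Ki ∘L At‖ := opNorm_comp_le _ _
    _ ≤ ((1 - ‖M‖)⁻¹ * b) * (d + s * a) :=
        mul_le_mul hInvNorm hRHS (norm_nonneg _) (by positivity)
    _ = (1 - ‖M‖)⁻¹ * (b * (d + s * a)) := by ring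
    _ ≤ (1 - ‖M‖)⁻¹ * (s * (1 - ‖M‖)) :=
        mul_le_mul_of_nonneg_left hfin (by positivity)
    _ = s := by
        rw [mul_comm s (1 - ‖M‖), ← mul_assoc, inv_mul_cancel₀ h1x.ne', one_mul]

/-- Existence and well-definedness of the backward recursion
`K_{T,T+1} = 0`, `K_{T,T-i-1} = L_{T,T-i}⁻¹ (Q₂₁,T-i + K_{T,T-i} A_{T-i})`,
`L_{T,T-i} = B_{T-i} + K_{T,T-i} Q₁₂,T-i`: every `L_{T,T-i}` is invertible and
`‖B_{T-i}⁻¹‖·‖K_{T,T-i+1}‖·‖Q₁₂,T-i‖ ≤ (1-ab)/2 < 1`.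
Here `K i` stands for `K_{T,T+1-i}`. -/
theorem stmt13 (n m : ℕ) (a b c d : ℝ)
    (A : ℕ → (EuclideanSpace ℝ (Fin n) →L[ℝ] EuclideanSpace ℝ (Fin n)))
    (B Binv : ℕ → (EuclideanSpace ℝ (Fin m) →L[ℝ] EuclideanSpace ℝ (Fin m)))
    (Q12 : ℕ → (EuclideanSpace ℝ (Fin m) →L[ℝ] EuclideanSpace ℝ (Fin n)))
    (Q21 : ℕ → (EuclideanSpace ℝ (Fin n) →L[ℝ] EuclideanSpace ℝ (Fin m)))
    (hBinv : ∀ t, B t ∘L Binv t = 1 ∧ Binv t ∘L B t = 1)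
    (hA : ∀ t, ‖A t‖ ≤ a) (hB : ∀ t, ‖Binv t‖ ≤ b)
    (hQ12 : ∀ t, ‖Q12 t‖ ≤ c) (hQ21 : ∀ t, ‖Q21 t‖ ≤ d)
    (ha1 : a < 1) (hb0 : 0 < b) (hb1 : b < 1)
    (hcd : c * d < ((1 - a * b) / (2 * b)) ^ 2) (T : ℕ) :
    ∃ K : ℕ → (EuclideanSpace ℝ (Fin n) →L[ℝ] EuclideanSpace ℝ (Fin m)),
      K 0 = 0 ∧
      (∀ i ≤ T,
        IsUnit (B (T - i) + K i ∘L Q12 (T - i)) ∧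
        K (i + 1) =
          (Ring.inverse (B (T - i) + K i ∘L Q12 (T - i))) ∘L
            (Q21 (T - i) + K i ∘L A (T - i)) ∧
        ‖Binv (T - i)‖ * ‖K i‖ * ‖Q12 (T - i)‖ ≤ (1 - a * b) / 2) ∧
      (1 - a * b) / 2 < 1 := by
  have ha0 : 0 ≤ a := le_trans (norm_nonneg _) (hA 0)
  have hc0 : 0 ≤ c := le_trans (norm_nonneg _) (hQ12 0)
  have hd0 : 0 ≤ d := le_trans (norm_nonneg _) (hQ21 0)
  have he : 0 < 1 - a * b := by nlinarith
  have he2 : (1 - a * b) / 2 < 1 := by nlinarith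
  have hΔ : 0 < (1 - a * b) ^ 2 - 4 * b ^ 2 * (c * d) := by
    have h4 : (0:ℝ) < (2 * b) ^ 2 := by positivity
    have h5 : c * d * (2 * b) ^ 2 < (1 - a * b) ^ 2 := by
      calc c * d * (2 * b) ^ 2 < ((1 - a * b) / (2 * b)) ^ 2 * (2 * b) ^ 2 :=
            mul_lt_mul_of_pos_right hcd h4
        _ = (1 - a * b) ^ 2 := by field_simp
    nlinarith [h5]
  set q : ℝ := Real.sqrt ((1 - a * b) ^ 2 - 4 * b ^ 2 * (c * d)) with hqdef
  have hq2 : q ^ 2 = (1 - a * b) ^ 2 - 4 * b ^ 2 * (c * d) := Real.sq_sqrt hΔ.le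
  have hq0 : 0 ≤ q := Real.sqrt_nonneg _
  have heq : 0 < (1 - a * b) + q := by linarith
  set s : ℝ := 2 * b * d / ((1 - a * b) + q) with hsdef
  have hs0 : 0 ≤ s := by positivity
  have h1 : s * ((1 - a * b) + q) = 2 * b * d := div_mul_cancel₀ _ heq.ne'
  have key2 : b * c * s ^ 2 + b * d = (1 - a * b) * s := by
    rcases hd0.eq_or_lt with hd | hd
    · have hd' : d = 0 := hd.symm
      subst hd'
      have hs : s = 0 := by rw [hsdef]; simp
      rw [hs]; ring
    · have hsq : s * q = 2 * b * d - s * (1 - a * b) := by linear_combination h1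
      have h3 : s ^ 2 * q ^ 2 = (2 * b * d - s * (1 - a * b)) ^ 2 := by
        linear_combination (s * q + (2 * b * d - s * (1 - a * b))) * hsq
      have h4 : 4 * b * d * ((1 - a * b) * s - b * c * s ^ 2 - b * d) = 0 := by
        linear_combination h3 - s ^ 2 * hq2
      have hbd : (0:ℝ) < 4 * b * d := by positivity
      have h5 : (1 - a * b) * s - b * c * s ^ 2 - b * d = 0 :=
        (mul_eq_zero.mp h4).resolve_left hbd.ne'
      linarith
  have key1 : b * c * s ≤ (1 - a * b) / 2 := by
    rw [← mul_le_mul_iff_of_pos_right heq]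
    have h2 : b * c * s * ((1 - a * b) + q) = 2 * b ^ 2 * (c * d) := by
      linear_combination (b * c) * h1
    rw [h2]
    nlinarith [hq2, mul_nonneg he.le hq0, sq_nonneg q]
  obtain ⟨K, hK0, hKsucc⟩ :
      ∃ K : ℕ → (EuclideanSpace ℝ (Fin n) →L[ℝ] EuclideanSpace ℝ (Fin m)),
        K 0 = 0 ∧ ∀ j, K (j + 1) = (Ring.inverse (B (T - j) + K j ∘L Q12 (T - j))) ∘L
          (Q21 (T - j) + K j ∘L A (T - j)) :=
    ⟨fun i => Nat.rec (motive := fun _ => EuclideanSpace ℝ (Fin n) →L[ℝ] EuclideanSpace ℝ (Fin m))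
      0 (fun j Kj => (Ring.inverse (B (T - j) + Kj ∘L Q12 (T - j))) ∘L
        (Q21 (T - j) + Kj ∘L A (T - j))) i, rfl, fun j => rfl⟩
  have hnorm : ∀ i, ‖K i‖ ≤ s := by
    intro i
    induction i with
    | zero => rw [hK0]; simpa using hs0
    | succ j ih =>
        rw [hKsucc j]
        exact (stmt13_step hb0 hs0 key1 he2 key2 (B (T - j)) (Binv (T - j)) (Q12 (T - j))
          (Q21 (T - j)) (K j) (A (T - j)) (hBinv (T - j)).1 (hBinv (T - j)).2
          (hB (T - j)) (hA (T - j)) (hQ12 (T - j)) (hQ21 (T - j)) ih).2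
  refine ⟨K, hK0, fun i _ => ?_, he2⟩
  refine ⟨(stmt13_step hb0 hs0 key1 he2 key2 (B (T - i)) (Binv (T - i)) (Q12 (T - i))
    (Q21 (T - i)) (K i) (A (T - i)) (hBinv (T - i)).1 (hBinv (T - i)).2
    (hB (T - i)) (hA (T - i)) (hQ12 (T - i)) (hQ21 (T - i)) (hnorm i)).1, hKsucc i, ?_⟩
  have hb1' : ‖Binv (T - i)‖ * ‖K i‖ * ‖Q12 (T - i)‖ ≤ b * s * c := by
    have h1 := hnorm i
    have h2 := hB (T - i)
    have h3 := hQ12 (T - i)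
    have n1 := norm_nonneg (Binv (T - i))
    have n2 := norm_nonneg (K i)
    have n3 := norm_nonneg (Q12 (T - i))
    have hbs : ‖Binv (T - i)‖ * ‖K i‖ ≤ b * s := mul_le_mul h2 h1 n2 hb0.le
    exact mul_le_mul hbs h3 n3 (by positivity)
  nlinarith [key1]
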